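/- Let K be a field of characteristic not 2, and λ ∈ K with λ ≠ 0 and λ⁴ ≠ 1. Then the map α ↦ α⁴ gives a bijection between the set of roots in K of u⁴ + 3 − 4λu = 0 and the set of roots in K of (s+3)⁴ − (4λ)⁴ s = 0, with inverse β ↦ (β+3)/(4λ). -/

import Mathlib

/-- For `λ` in a field `K` of characteristic `≠ 2` with `λ ≠ 0`, `λ⁴ ≠ 1`, the map
`α ↦ α⁴` is a bijection from the roots of `u⁴ + 3 − 4λu` onto the roots of
`(s+3)⁴ − (4λ)⁴ s`, with inverse `β ↦ (β+3)/(4λ)`. -/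
theorem stmt11 {K : Type*} [Field K] (h2 : (2 : K) ≠ 0) (lam : K)
    (hlam0 : lam ≠ 0) (hlam1 : lam ^ 4 ≠ 1) :
    Set.BijOn (fun α : K => α ^ 4)
      {α : K | α ^ 4 + 3 - 4 * lam * α = 0}
      {β : K | (β + 3) ^ 4 - (4 * lam) ^ 4 * β = 0} ∧
    Set.InvOn (fun β : K => (β + 3) / (4 * lam)) (fun α : K => α ^ 4)
      {α : K | α ^ 4 + 3 - 4 * lam * α = 0}
      {β : K | (β + 3) ^ 4 - (4 * lam) ^ 4 * β = 0} := by
  have h4 : (4 : K) * lam ≠ 0 := by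
    have h4' : (4 : K) ≠ 0 := by
      intro h
      apply h2
      have : (2 : K) * 2 = 0 := by norm_num at h ⊢; linear_combination h
      rcases mul_eq_zero.mp this with h | h <;> exact h
    exact mul_ne_zero h4' hlam0
  have maps1 : Set.MapsTo (fun α : K => α ^ 4)
      {α : K | α ^ 4 + 3 - 4 * lam * α = 0}
      {β : K | (β + 3) ^ 4 - (4 * lam) ^ 4 * β = 0} := by
    intro α hα
    simp only [Set.mem_setOf_eq] at hα ⊢
    linear_combination ((α ^ 4 + 3) ^ 3 + (α ^ 4 + 3) ^ 2 * (4 * lam * α)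
      + (α ^ 4 + 3) * (4 * lam * α) ^ 2 + (4 * lam * α) ^ 3) * hα
  have maps2 : Set.MapsTo (fun β : K => (β + 3) / (4 * lam))
      {β : K | (β + 3) ^ 4 - (4 * lam) ^ 4 * β = 0}
      {α : K | α ^ 4 + 3 - 4 * lam * α = 0} := by
    intro β hβ
    simp only [Set.mem_setOf_eq] at hβ ⊢
    have key : (β + 3) ^ 4 = (4 * lam) ^ 4 * β := by linear_combination hβ
    rw [div_pow, key, mul_div_cancel_left₀ β (pow_ne_zero 4 h4), mul_div_assoc',
      mul_div_cancel_left₀ _ h4]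
    ring
  have hinv : Set.InvOn (fun β : K => (β + 3) / (4 * lam)) (fun α : K => α ^ 4)
      {α : K | α ^ 4 + 3 - 4 * lam * α = 0}
      {β : K | (β + 3) ^ 4 - (4 * lam) ^ 4 * β = 0} := by
    constructor
    · intro α hα
      simp only [Set.mem_setOf_eq] at hα
      have : α ^ 4 + 3 = 4 * lam * α := by linear_combination hα
      simp only [this]
      exact mul_div_cancel_left₀ α h4
    · intro β hβ
      simp only [Set.mem_setOf_eq] at hβ
      simp only [div_pow]
      rw [show (β + 3) ^ 4 = (4 * lam) ^ 4 * β by linear_combination hβ]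
      exact mul_div_cancel_left₀ β (pow_ne_zero 4 h4)
  exact ⟨hinv.bijOn maps1 maps2, hinv⟩
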